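/- Let d, n, ℓ ∈ ℕ, η > 0, X ∈ ℝ^{n×d} with rows x_1,…,x_n ∈ ℝ^d, y ∈ ℝ^n, and w_0,…,w_ℓ ∈ ℝ^d. Define V_GD, W_GD ∈ ℝ^{(2d+2)×(2d+2)} in block form (blocks of sizes d,1,d,1): V_GD is zero except for the block −η·I_d in rows d+2,…,2d+1 and columns 1,…,d; W_GD is zero except for the block I_d in rows 1,…,d and columns d+2,…,2d+1 and the entry −1 in row d+1, column 2d+2. Let H_ℓ ∈ ℝ^{(2d+2)×(n+ℓ+1)} be the matrix whose i-th column (i ≤ n) is (x_i, y_i, 0_d, 0)ᵀ and whose (n+1+j)-th column (0 ≤ j ≤ ℓ) is (0_d, 0, w_j, 1)ᵀ. Then the last column of TF(H_ℓ) := H_ℓ + V_GD · H_ℓ · (H_ℓᵀ W_GD H_ℓ)/n equals (0_d, 0, w_ℓ − (η/n)·Xᵀ(X w_ℓ − y), 1)ᵀ, i.e., the one-layer attention block with parameters (V_GD, W_GD) outputs one gradient-descent step on the least-squares loss at the last position. -/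

import Mathlib

/- STATEMENT 0: A one-layer linear self-attention block with parameters (V_GD, W_GD)
implements one gradient-descent step on the least-squares loss at the last position.
The embedding dimension 2d+2 is realized as the index type `(Fin d ⊕ Unit) ⊕ (Fin d ⊕ Unit)`
(blocks of sizes d, 1, d, 1), and the n+ℓ+1 columns as `Fin n ⊕ Fin (ℓ+1)`. -/

open Matrix

/-- Row/column index for the embedding dimension 2d+2, in blocks of sizes d, 1, d, 1. -/
abbrev EmbIdx (d : ℕ) := (Fin d ⊕ Unit) ⊕ (Fin d ⊕ Unit)

/-- The value matrix `V_GD`: zero except for the block `-η · I_d` in rows d+2,…,2d+1 and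
columns 1,…,d. -/
noncomputable def Vgd (d : ℕ) (η : ℝ) : Matrix (EmbIdx d) (EmbIdx d) ℝ := fun i j =>
  match i, j with
  | Sum.inr (Sum.inl a), Sum.inl (Sum.inl b) => if a = b then -η else 0
  | _, _ => 0

/-- The key-query matrix `W_GD`: zero except for the block `I_d` in rows 1,…,d and
columns d+2,…,2d+1 and the entry `-1` in row d+1, column 2d+2. -/
noncomputable def Wgd (d : ℕ) : Matrix (EmbIdx d) (EmbIdx d) ℝ := fun i j =>
  match i, j with
  | Sum.inl (Sum.inl a), Sum.inr (Sum.inl b) => if a = b then 1 else 0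
  | Sum.inl (Sum.inr _), Sum.inr (Sum.inr _) => -1
  | _, _ => 0

/-- The prompt matrix `H_ℓ`: the i-th column (i ≤ n) is (xᵢ, yᵢ, 0_d, 0)ᵀ and the
(n+1+j)-th column (0 ≤ j ≤ ℓ) is (0_d, 0, w_j, 1)ᵀ. -/
noncomputable def promptMat (d n ℓ : ℕ) (x : Fin n → Fin d → ℝ) (y : Fin n → ℝ)
    (w : Fin (ℓ + 1) → Fin d → ℝ) : Matrix (EmbIdx d) (Fin n ⊕ Fin (ℓ + 1)) ℝ := fun i c =>
  match c, i with
  | Sum.inl r, Sum.inl (Sum.inl a) => x r a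
  | Sum.inl r, Sum.inl (Sum.inr _) => y r
  | Sum.inl _, Sum.inr _ => 0
  | Sum.inr _, Sum.inl _ => 0
  | Sum.inr s, Sum.inr (Sum.inl a) => w s a
  | Sum.inr _, Sum.inr (Sum.inr _) => 1

theorem stmt0 (d n ℓ : ℕ) (hn : 0 < n) (η : ℝ)
    (x : Fin n → Fin d → ℝ) (y : Fin n → ℝ) (w : Fin (ℓ + 1) → Fin d → ℝ) :
    ∀ i : EmbIdx d,
      (promptMat d n ℓ x y w +
        (n : ℝ)⁻¹ • (Vgd d η * promptMat d n ℓ x y w *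
          ((promptMat d n ℓ x y w)ᵀ * Wgd d * promptMat d n ℓ x y w)))
        i (Sum.inr (Fin.last ℓ))
      = match i with
        | Sum.inl (Sum.inl _) => 0
        | Sum.inl (Sum.inr _) => 0
        | Sum.inr (Sum.inl a) =>
            (w (Fin.last ℓ) - (η / n) •
              ((Matrix.of x)ᵀ.mulVec ((Matrix.of x).mulVec (w (Fin.last ℓ)) - y))) a
        | Sum.inr (Sum.inr _) => 1 := by
  set H := promptMat d n ℓ x y w with hH
  have hWH : ∀ i : EmbIdx d, (Wgd d * H) i (Sum.inr (Fin.last ℓ)) =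
      match i with
      | Sum.inl (Sum.inl a) => w (Fin.last ℓ) a
      | Sum.inl (Sum.inr _) => -1
      | _ => 0 := by
    rintro ((a|u)|(a|u)) <;>
      simp [Wgd, promptMat, hH, Matrix.mul_apply, Fintype.sum_sum_type, ite_mul,
        Finset.sum_ite_eq, Finset.sum_ite_eq']
  have hHWH : ∀ k : Fin n ⊕ Fin (ℓ+1), (Hᵀ * (Wgd d * H)) k (Sum.inr (Fin.last ℓ)) =
      match k with
      | Sum.inl r => (∑ b, x r b * w (Fin.last ℓ) b) - y r
      | Sum.inr _ => 0 := by
    rintro (r|s) <;>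
      rw [Matrix.mul_apply] <;> simp only [Fintype.sum_sum_type, hWH] <;>
      simp [Matrix.mul_apply, Fintype.sum_sum_type, hWH, promptMat, hH,
        Matrix.transpose_apply, sub_eq_add_neg]
  have hVH : ∀ i k, (Vgd d η * H) i k =
      match i, k with
      | Sum.inr (Sum.inl a), Sum.inl r => -η * x r a
      | _, _ => 0 := by
    rintro ((a|u)|(a|u)) (r|s) <;>
      simp [Vgd, promptMat, hH, Matrix.mul_apply, Fintype.sum_sum_type, ite_mul,
        Finset.sum_ite_eq, Finset.sum_ite_eq']
  have hassoc : Hᵀ * Wgd d * H = Hᵀ * (Wgd d * H) := Matrix.mul_assoc _ _ _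
  rintro ((a|u)|(a|u)) <;>
    · rw [Matrix.add_apply, Matrix.smul_apply, hassoc, Matrix.mul_apply]
      simp only [Fintype.sum_sum_type, hVH, hHWH]
      simp [promptMat, hH, Matrix.mulVec, dotProduct, Finset.mul_sum, div_eq_mul_inv,
        mul_comm, mul_left_comm, mul_assoc, sub_eq_add_neg, neg_mul, mul_neg]
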